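/- Let D = (G, O, w) be a weighted oriented graph where G is an SCQ graph with partition given by the simplexes S_G, the basic 5-cycles C_G and the matching Q_G, and let C be a vertex cover of D. Then |C| = τ(G) if and only if |C ∩ V(K)| = |V(K)| − 1 for every K ∈ S_G, |C ∩ V(C′)| = 3 for every C′ ∈ C_G, and |C ∩ e| = 1 for every e ∈ Q_G. -/

import Mathlib

/-! ## Weighted oriented graphs -/

/-- A weighted oriented graph `D = (G, 𝒪, w)`: an orientation of a finite simple
graph together with a weight function, where sources have weight `1`. -/
structure WOGraph (V : Type) where
  /-- the set of directed edges -/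
  E : V → V → Prop
  irrefl : ∀ x, ¬ E x x
  asymm : ∀ x y, E x y → ¬ E y x
  /-- the weight function -/
  w : V → ℕ
  w_pos : ∀ x, 1 ≤ w x
  source_one : ∀ x, (∀ y, ¬ E y x) → w x = 1

namespace WOGraph

variable {V : Type}

/-- The underlying simple graph `G` of `D`. -/
def graph (D : WOGraph V) : SimpleGraph V := SimpleGraph.fromRel D.E

/-- Out-neighbourhood `N⁺_D(x)`. -/
def outN (D : WOGraph V) (x : V) : Set V := {y | D.E x y}

/-- In-neighbourhood `N⁻_D(x)`. -/
def inN (D : WOGraph V) (x : V) : Set V := {y | D.E y x}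

/-- Neighbourhood `N_D(x)`. -/
def nbr (D : WOGraph V) (x : V) : Set V := {y | D.E x y ∨ D.E y x}

/-- `N_D(A)` for a set `A` of vertices. -/
def nbrS (D : WOGraph V) (A : Set V) : Set V := {y | ∃ a ∈ A, y ∈ D.nbr a}

/-- `N⁺_D(A)` for a set `A` of vertices. -/
def outNS (D : WOGraph V) (A : Set V) : Set V := {y | ∃ a ∈ A, D.E a y}

/-- `V⁺`, the set of vertices of weight `> 1`. -/
def Vplus (D : WOGraph V) : Set V := {x | 1 < D.w x}

/-- A vertex cover of `D`. -/
def IsVC (D : WOGraph V) (C : Set V) : Prop := ∀ u v, D.E u v → u ∈ C ∨ v ∈ C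

/-- `L₁(C)`. -/
def L1 (D : WOGraph V) (C : Set V) : Set V := {x | x ∈ C ∧ ∃ y, D.E x y ∧ y ∉ C}

/-- `L₂(C)`. -/
def L2 (D : WOGraph V) (C : Set V) : Set V :=
  {x | x ∈ C ∧ x ∉ D.L1 C ∧ ∃ y, D.E y x ∧ y ∉ C}

/-- `L₃(C)`. -/
def L3 (D : WOGraph V) (C : Set V) : Set V := {x | x ∈ C ∧ x ∉ D.L1 C ∧ x ∉ D.L2 C}

/-- A strong vertex cover of `D`. -/
def IsStrongVC (D : WOGraph V) (C : Set V) : Prop :=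
  D.IsVC C ∧ ∀ x ∈ D.L3 C, ∃ y, D.E y x ∧ y ∈ C ∧ y ∉ D.L1 C ∧ 1 < D.w y

/-- A weighted oriented subgraph of `D`. -/
structure OSub (D : WOGraph V) where
  verts : Set V
  E : V → V → Prop
  sub : ∀ u v, E u v → D.E u v
  memL : ∀ u v, E u v → u ∈ verts
  memR : ∀ u v, E u v → v ∈ verts

namespace OSub

variable {D : WOGraph V}

/-- The underlying simple graph of a weighted oriented subgraph. -/
def graph (H : D.OSub) : SimpleGraph V := SimpleGraph.fromRel H.E

/-- Neighbourhood inside the subgraph. -/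
def nbr (H : D.OSub) (x : V) : Set V := {y | H.E x y ∨ H.E y x}

/-- Degree inside the subgraph. -/
noncomputable def deg (H : D.OSub) (x : V) : ℕ := (H.nbr x).ncard

/-- `H` is contained in `K`. -/
def le (H K : D.OSub) : Prop := H.verts ⊆ K.verts ∧ ∀ u v, H.E u v → K.E u v

end OSub

/-- The induced weighted oriented subgraph on a set `A` of vertices. -/
def induced (D : WOGraph V) (A : Set V) : D.OSub where
  verts := A
  E u v := D.E u v ∧ u ∈ A ∧ v ∈ A
  sub _ _ h := h.1
  memL _ _ h := h.2.1
  memR _ _ h := h.2.2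

/-- `K` is an induced weighted oriented subgraph of `D`. -/
def IsInducedSub {D : WOGraph V} (K : D.OSub) : Prop :=
  ∀ u v, D.E u v → u ∈ K.verts → v ∈ K.verts → K.E u v

/-- A root oriented tree (ROT) with parent `v`. -/
def IsROT (D : WOGraph V) (T : D.OSub) (v : V) : Prop :=
  v ∈ T.verts ∧ T.graph.IsAcyclic ∧
  (∀ x ∈ T.verts, Relation.ReflTransGen T.E v x) ∧
  (∀ x ∈ T.verts, D.w x = 1 → (T.deg x = 1 ∧ x ≠ v) ∨ (T.verts = {v} ∧ x = v))

/-- A unicycle oriented subgraph whose (unique) cycle has vertex set `Cs`. -/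
def IsUnicycle (D : WOGraph V) (B : D.OSub) (Cs : Set V) : Prop :=
  (∃ (n : ℕ) (f : ZMod n → V), 3 ≤ n ∧ Function.Injective f ∧ Set.range f = Cs ∧
      ∀ i, B.E (f i) (f (i + 1))) ∧
  (∀ (a : V) (p : B.graph.Walk a a), p.IsCycle → {x | x ∈ p.support} = Cs) ∧
  (∀ y ∈ B.verts, y ∉ Cs → ∃ x ∈ Cs, Relation.ReflTransGen B.E x y) ∧
  (∀ x ∈ B.verts, D.w x = 1 → B.deg x = 1)

/-- A `⋆`-semi-forest structure on a weighted oriented subgraph `H` of `D`. -/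
structure SSF (D : WOGraph V) (H : D.OSub) where
  r : ℕ
  s : ℕ
  T : Fin r → D.OSub
  parent : Fin r → V
  B : Fin s → D.OSub
  Cs : Fin s → Set V
  hT : ∀ i, D.IsROT (T i) (parent i)
  hB : ∀ j, D.IsUnicycle (B j) (Cs j)
  hverts : H.verts = (⋃ i, (T i).verts) ∪ (⋃ j, (B j).verts)
  hE : ∀ u v, H.E u v ↔ ((∃ i, (T i).E u v) ∨ (∃ j, (B j).E u v))
  hTT : ∀ i i', i ≠ i' → Disjoint (T i).verts (T i').verts
  hBB : ∀ j j', j ≠ j' → Disjoint (B j).verts (B j').verts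
  hTB : ∀ i j, Disjoint (T i).verts (B j).verts
  wv : Fin r → V
  hwv_not : ∀ i, wv i ∉ H.verts
  hwv_nbr : ∀ i, wv i ∈ D.nbr (parent i)
  W1 : Set V
  W2 : Set V
  hW_union : W1 ∪ W2 = Set.range wv
  hW_disj : Disjoint W1 W2
  hW1_stable : ∀ x ∈ W1, ∀ y ∈ W1, ¬ D.graph.Adj x y
  hW2_plus : W2 ⊆ D.Vplus
  hW2_edge : ∀ i, wv i ∈ W2 → D.E (wv i) (parent i)
  hW1_out : D.outNS (W2 ∪ ({x | x ∈ H.verts ∧ 2 ≤ H.deg x} ∪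
      {x | (∃ i, parent i = x) ∧ H.deg x = 1})) ∩ W1 = ∅

/-- The set `H̃` associated with a `⋆`-semi-forest. -/
noncomputable def SSF.tilde {D : WOGraph V} {H : D.OSub} (F : D.SSF H) : Set V :=
  {x | x ∈ H.verts ∧ 2 ≤ H.deg x} ∪ {x | (∃ i, F.parent i = x) ∧ H.deg x = 1}

/-- `K` has a generating `⋆`-semi-forest. -/
def HasGenSSF (D : WOGraph V) (K : D.OSub) : Prop :=
  ∃ H : D.OSub, Nonempty (D.SSF H) ∧ H.verts = K.verts

/-- The `⋆`-condition for a 5-tuple `(a', a, b, b', c)` written along an induced 5-cycle. -/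
def StarCond (D : WOGraph V) (a' a b b' c : V) : Prop :=
  (D.E a' a ∧ D.w a' = 1) ∧
  (D.inN a ⊆ D.nbr c ∧ D.inN a ∩ D.Vplus ⊆ D.inN c) ∧
  (D.nbr b' ⊆ D.nbr a' ∪ D.outN a ∧ D.inN b' ∩ D.Vplus ⊆ D.inN a')

/-- The `⋆`-property for an induced 5-cycle `z 0, z 1, z 2, z 3, z 4`. -/
def HasStarProp (D : WOGraph V) (z : Fin 5 → V) : Prop :=
  ∀ i : Fin 5,
    (D.E (z i) (z (i + 1)) ∧ 1 < D.w (z i) →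
      StarCond D (z (i - 1)) (z i) (z (i + 1)) (z (i + 2)) (z (i + 3))) ∧
    (D.E (z (i + 1)) (z i) ∧ 1 < D.w (z (i + 1)) →
      StarCond D (z (i + 2)) (z (i + 1)) (z i) (z (i - 1)) (z (i - 2)))

/-- The edge ideal `I(D)` of a weighted oriented graph in `k[x_v : v ∈ V]`. -/
noncomputable def edgeIdeal (k : Type) [Field k] (D : WOGraph V) : Ideal (MvPolynomial V k) :=
  Ideal.span {f | ∃ u v, D.E u v ∧ f = MvPolynomial.X u * MvPolynomial.X v ^ D.w v}

end WOGraph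

/-! ## Generic graph notions -/

/-- A vertex cover of a simple graph. -/
def gVC {W : Type} (G : SimpleGraph W) (C : Set W) : Prop :=
  ∀ u v, G.Adj u v → u ∈ C ∨ v ∈ C

/-- The vertex cover number `τ(G)`. -/
noncomputable def tau {W : Type} (G : SimpleGraph W) : ℕ :=
  sInf {n | ∃ C : Set W, gVC G C ∧ C.ncard = n}

/-- A stable (independent) set. -/
def Stable {W : Type} (G : SimpleGraph W) (S : Set W) : Prop :=
  ∀ x ∈ S, ∀ y ∈ S, ¬ G.Adj x y

/-- `G` is well-covered: all maximal stable sets have the same cardinality. -/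
def WellCovered {W : Type} (G : SimpleGraph W) : Prop :=
  ∀ S T : Set W, Maximal (Stable G) S → Maximal (Stable G) T → S.ncard = T.ncard

/-- `e` is (the vertex set of) an edge of `G`. -/
def IsEdgeSet {W : Type} (G : SimpleGraph W) (e : Set W) : Prop :=
  ∃ u v, G.Adj u v ∧ e = {u, v}

/-- An edge `e = {b, b'}` has the property (P). -/
def PropP {W : Type} (G : SimpleGraph W) (e : Set W) : Prop :=
  ∀ a b a' b', e = {b, b'} → G.Adj a b → G.Adj a' b' → a ∉ e → a' ∉ e → G.Adj a a'

/-- A matching of `G`, as a set of (vertex sets of) edges. -/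
def IsMatchingSet {W : Type} (G : SimpleGraph W) (M : Set (Set W)) : Prop :=
  (∀ e ∈ M, IsEdgeSet G e) ∧ M.Pairwise Disjoint

/-- A perfect matching of `G`. -/
def IsPerfectMatchingSet {W : Type} (G : SimpleGraph W) (M : Set (Set W)) : Prop :=
  IsMatchingSet G M ∧ ⋃₀ M = Set.univ

/-- The matching number `ν(G)`. -/
noncomputable def nu {W : Type} (G : SimpleGraph W) : ℕ :=
  sSup {n | ∃ M, IsMatchingSet G M ∧ M.ncard = n}

/-- The degree of a vertex. -/
noncomputable def gdeg {W : Type} (G : SimpleGraph W) (x : W) : ℕ := (G.neighborSet x).ncard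

/-- `v` is a simplicial vertex: its closed neighbourhood is a clique. -/
def IsSimplicialVtx {W : Type} (G : SimpleGraph W) (v : W) : Prop :=
  G.IsClique (insert v (G.neighborSet v))

/-- The set `S_G` of (vertex sets of) simplexes of `G`. -/
def SimplexSets {W : Type} (G : SimpleGraph W) : Set (Set W) :=
  {S | ∃ v, IsSimplicialVtx G v ∧ S = insert v (G.neighborSet v)}

/-- `G` is a simplicial graph. -/
def SimplicialGraph {W : Type} (G : SimpleGraph W) : Prop :=
  ∀ v, IsSimplicialVtx G v ∨ ∃ u, G.Adj v u ∧ IsSimplicialVtx G u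

/-- The cycle graph on `ZMod n`. -/
def cycGraph (n : ℕ) : SimpleGraph (ZMod n) := SimpleGraph.fromRel (fun i j => j = i + 1)

/-- `G` is chordal: it has no induced cycles of length `≥ 4`. -/
def Chordal {W : Type} (G : SimpleGraph W) : Prop :=
  ∀ n : ℕ, 4 ≤ n → ∀ A : Set W, IsEmpty (G.induce A ≃g cycGraph n)

/-- `G` has a cycle of length `k`. -/
def HasCycleLen {W : Type} (G : SimpleGraph W) (k : ℕ) : Prop :=
  ∃ (a : W) (p : G.Walk a a), p.IsCycle ∧ p.length = k

/-- `z 0, z 1, z 2, z 3, z 4` is an induced 5-cycle of `G`. -/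
def IsInduced5Cycle {W : Type} (G : SimpleGraph W) (z : Fin 5 → W) : Prop :=
  Function.Injective z ∧ ∀ i j : Fin 5, G.Adj (z i) (z j) ↔ (j = i + 1 ∨ i = j + 1)

/-- A basic 5-cycle: an induced 5-cycle without two adjacent vertices of degree `≥ 3`. -/
def IsBasic5Cycle {W : Type} (G : SimpleGraph W) (z : Fin 5 → W) : Prop :=
  IsInduced5Cycle G z ∧ ∀ i : Fin 5, ¬ (3 ≤ gdeg G (z i) ∧ 3 ≤ gdeg G (z (i + 1)))

/-- The set `C_G` of (vertex sets of) basic 5-cycles of `G`. -/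
def Basic5Sets {W : Type} (G : SimpleGraph W) : Set (Set W) :=
  {A | ∃ z : Fin 5 → W, IsBasic5Cycle G z ∧ A = Set.range z}

/-- The clique number `ω(G)`. -/
noncomputable def cliqueNum' {W : Type} (G : SimpleGraph W) : ℕ :=
  sSup {n | ∃ s : Set W, G.IsClique s ∧ s.ncard = n}

/-- `G` is a perfect graph. -/
def IsPerfectGraph {W : Type} (G : SimpleGraph W) : Prop :=
  ∀ A : Set W, (G.induce A).chromaticNumber = (cliqueNum' (G.induce A) : ℕ∞)

/-- A `τ`-reduction of `G` into the induced subgraphs on the `A i`. -/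
noncomputable def TauReduction {W : Type} (G : SimpleGraph W) (s : ℕ) (A : Fin s → Set W) : Prop :=
  (∀ i j, i ≠ j → Disjoint (A i) (A j)) ∧ (⋃ i, A i) = Set.univ ∧
  tau G = ∑ i, tau (G.induce (A i))

/-- `G` is an SCQ graph witnessed by the matching `Q`. -/
def IsSCQ {V : Type} (D : WOGraph V) (Q : Set (Set V)) : Prop :=
  (Q = ∅ ∨ (IsMatchingSet D.graph Q ∧ ∀ e ∈ Q, PropP D.graph e)) ∧
  (∀ A ∈ SimplexSets D.graph ∪ Basic5Sets D.graph ∪ Q,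
    ∀ B ∈ SimplexSets D.graph ∪ Basic5Sets D.graph ∪ Q, A = B ∨ Disjoint A B) ∧
  ⋃₀ (SimplexSets D.graph ∪ Basic5Sets D.graph ∪ Q) = Set.univ

/-- An ideal is unmixed if all its associated primes have the same height. -/
def IsUnmixed {R : Type} [CommRing R] (I : Ideal R) : Prop :=
  ∀ p q : Ideal R, p ∈ associatedPrimes R (R ⧸ I) → q ∈ associatedPrimes R (R ⧸ I) →
    ∀ (hp : p.IsPrime) (hq : q.IsPrime),
      Order.height (⟨p, hp⟩ : PrimeSpectrum R) = Order.height (⟨q, hq⟩ : PrimeSpectrum R)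
/-! ## Concrete graphs -/

/-- The 7-cycle `C₇`. -/
def C7graph : SimpleGraph (ZMod 7) := cycGraph 7

/-- Vertices of `T₁₀`. -/
inductive T10V | v | a1 | a2 | a3 | b1 | b2 | b3 | c1 | c2 | c3
deriving DecidableEq

open T10V in
instance instFintypeT10V : Fintype T10V where
  elems := {v, a1, a2, a3, b1, b2, b3, c1, c2, c3}
  complete := by intro x; cases x <;> simp

open T10V in
/-- The graph `T₁₀`. -/
def T10graph : SimpleGraph T10V := SimpleGraph.fromRel (fun x y =>
  (x, y) ∈ ([(v,a1), (v,a2), (v,a3), (a1,b1), (a2,b2), (a3,b3), (b1,c1), (b2,c2),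
    (b3,c3), (c1,c2), (c2,c3), (c3,c1)] : List (T10V × T10V)))

/-- Vertices of `Q₁₃`. -/
inductive Q13V | a1 | a2 | b1 | b2 | c1 | c2 | d1 | d2 | g1 | g2 | h | h' | v
deriving DecidableEq

open Q13V in
instance instFintypeQ13V : Fintype Q13V where
  elems := {a1, a2, b1, b2, c1, c2, d1, d2, g1, g2, h, h', v}
  complete := by intro x; cases x <;> simp

open Q13V in
/-- The graph `Q₁₃`. -/
def Q13graph : SimpleGraph Q13V := SimpleGraph.fromRel (fun x y =>
  (x, y) ∈ ([(a1,a2), (a1,d1), (a2,d2), (d1,c1), (d1,g1), (d1,h), (d2,c2), (d2,g2),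
    (d2,h), (g1,b1), (g1,h'), (g2,b2), (g2,h'), (b1,c2), (b2,c1), (h,v),
    (h',v)] : List (Q13V × Q13V)))

/-- Vertices of `P₁₃`. -/
inductive P13V | a1 | a2 | a3 | a4 | b1 | b2 | b3 | b4 | c1 | c2 | d1 | d2 | v
deriving DecidableEq

open P13V in
instance instFintypeP13V : Fintype P13V where
  elems := {a1, a2, a3, a4, b1, b2, b3, b4, c1, c2, d1, d2, v}
  complete := by intro x; cases x <;> simp

open P13V in
/-- The graph `P₁₃`. -/
def P13graph : SimpleGraph P13V := SimpleGraph.fromRel (fun x y =>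
  (x, y) ∈ ([(a1,a2), (a1,b1), (a2,b2), (a3,a4), (a3,b3), (a4,b4), (b1,c1), (b2,c1),
    (b3,c2), (b4,c2), (c1,c2), (d1,b1), (d1,b3), (d2,b2), (d2,b4), (v,d1),
    (v,d2)] : List (P13V × P13V)))

/-- Vertices of `P₁₄`. -/
inductive P14V | a1 | a2 | a3 | a4 | a5 | a6 | a7 | b1 | b2 | b3 | b4 | b5 | b6 | b7
deriving DecidableEq

open P14V in
instance instFintypeP14V : Fintype P14V where
  elems := {a1, a2, a3, a4, a5, a6, a7, b1, b2, b3, b4, b5, b6, b7}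
  complete := by intro x; cases x <;> simp

open P14V in
/-- The graph `P₁₄`. -/
def P14graph : SimpleGraph P14V := SimpleGraph.fromRel (fun x y =>
  (x, y) ∈ ([(a1,a2), (a2,a3), (a3,a4), (a4,a5), (a5,a6), (a6,a7), (a7,a1),
    (a1,b1), (a2,b2), (a3,b3), (a4,b4), (a5,b5), (a6,b6), (a7,b7),
    (b1,b3), (b2,b4), (b3,b5), (b4,b6), (b5,b7), (b6,b1), (b7,b2)] : List (P14V × P14V)))

/-- Vertices of `P₁₀`. -/
inductive P10V | a1 | a2 | b1 | b2 | c1 | c2 | d1 | d2 | g1 | g2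
deriving DecidableEq

open P10V in
instance instFintypeP10V : Fintype P10V where
  elems := {a1, a2, b1, b2, c1, c2, d1, d2, g1, g2}
  complete := by intro x; cases x <;> simp

open P10V in
/-- The graph `P₁₀`. -/
def P10graph : SimpleGraph P10V := SimpleGraph.fromRel (fun x y =>
  (x, y) ∈ ([(a1,b1), (b1,d2), (d2,d1), (d1,b2), (b2,a2), (a1,g1), (g1,d1), (g1,c1),
    (c1,c2), (c2,g2), (g2,a2), (d2,g2)] : List (P10V × P10V)))
open Set

lemma ncard_partition' {V : Type} [Fintype V] {P : Set (Set V)}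
    (hdisj : ∀ A ∈ P, ∀ B ∈ P, A = B ∨ Disjoint A B) (hcov : ⋃₀ P = Set.univ)
    (X : Set V) :
    X.ncard = ∑ A ∈ (Set.toFinite P).toFinset, (X ∩ A).ncard := by
  classical
  have h2 : (Set.toFinite X).toFinset
      = (Set.toFinite P).toFinset.biUnion (fun A => (Set.toFinite (X ∩ A)).toFinset) := by
    ext x
    simp only [Set.Finite.mem_toFinset, Finset.mem_biUnion, Set.mem_inter_iff]
    constructor
    · intro hx
      have : x ∈ ⋃₀ P := by rw [hcov]; trivial
      obtain ⟨A, hA, hxA⟩ := this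
      exact ⟨A, hA, hx, hxA⟩
    · rintro ⟨A, _, hx, _⟩; exact hx
  have h3 : ((Set.toFinite P).toFinset.biUnion
        (fun A => (Set.toFinite (X ∩ A)).toFinset)).card
      = ∑ A ∈ (Set.toFinite P).toFinset, ((Set.toFinite (X ∩ A)).toFinset).card := by
    apply Finset.card_biUnion
    intro A hA B hB hAB
    rw [Function.onFun_apply, Set.Finite.disjoint_toFinset]
    rcases hdisj A ((Set.Finite.mem_toFinset _).1 hA) B ((Set.Finite.mem_toFinset _).1 hB) with h | h
    · exact absurd h hAB
    · exact (h.mono inter_subset_right inter_subset_right)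
  rw [Set.ncard_eq_toFinset_card X (Set.toFinite X), h2, h3]
  exact Finset.sum_congr rfl fun A _ => (Set.ncard_eq_toFinset_card _ _).symm

lemma fin5_aux (p : Fin 5 → Prop) (h1 : ∀ i, ¬ (p i ∧ p (i + 1)))
    (h2 : ∀ i, p i ∨ p (i + 2)) : False := by
  have a0 := h1 0; have a1 := h1 1; have a2 := h1 2; have a3 := h1 3; have a4 := h1 4
  have b0 := h2 0; have b1 := h2 1; have b2 := h2 2; have b3 := h2 3; have b4 := h2 4
  have e1 : (0:Fin 5) + 1 = 1 := rfl
  have e2 : (1:Fin 5) + 1 = 2 := rfl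
  have e3 : (2:Fin 5) + 1 = 3 := rfl
  have e4 : (3:Fin 5) + 1 = 4 := rfl
  have e5 : (4:Fin 5) + 1 = 0 := rfl
  have f1 : (0:Fin 5) + 2 = 2 := rfl
  have f2 : (1:Fin 5) + 2 = 3 := rfl
  have f3 : (2:Fin 5) + 2 = 4 := rfl
  have f4 : (3:Fin 5) + 2 = 0 := rfl
  have f5 : (4:Fin 5) + 2 = 1 := rfl
  rw [e1] at a0; rw [e2] at a1; rw [e3] at a2; rw [e4] at a3; rw [e5] at a4
  rw [f1] at b0; rw [f2] at b1; rw [f3] at b2; rw [f4] at b3; rw [f5] at b4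
  tauto

lemma fin5_three (i j k : Fin 5) (hij : i ≠ j) (hjk : j ≠ k) (hik : i ≠ k) :
    (j = i + 1 ∨ i = j + 1) ∨ (k = j + 1 ∨ j = k + 1) ∨ (k = i + 1 ∨ i = k + 1) := by
  revert hij hjk hik; revert i j k; decide
open Set

lemma greedy_transversal {V : Type} (G : SimpleGraph V) (Q' : Set (Set V))
    (hedge : ∀ e ∈ Q', IsEdgeSet G e) (hP : ∀ e ∈ Q', PropP G e)
    (hdisj : ∀ e ∈ Q', ∀ f ∈ Q', e = f ∨ Disjoint e f) :
    ∀ S : Set (Set V), S.Finite → S ⊆ Q' →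
      ∃ I : Set V, I ⊆ ⋃₀ S ∧ (∀ e ∈ S, ∃ x, I ∩ e = {x}) ∧
        (∀ x ∈ I, ∀ y ∈ I, ¬ G.Adj x y) := by
  intro S hS
  refine Set.Finite.induction_on (motive := fun S _ => S ⊆ Q' →
      ∃ I : Set V, I ⊆ ⋃₀ S ∧ (∀ e ∈ S, ∃ x, I ∩ e = {x}) ∧
        (∀ x ∈ I, ∀ y ∈ I, ¬ G.Adj x y)) S hS
    (fun _ => ⟨∅, by simp, by simp, by simp⟩) ?_
  intro e s he hs ih hsub
  have hsQ : s ⊆ Q' := fun f hf => hsub (Set.mem_insert_of_mem _ hf)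
  have heQ : e ∈ Q' := hsub (Set.mem_insert _ _)
  obtain ⟨I, hIsub, hIone, hIind⟩ := ih hsQ
  -- I is disjoint from e
  have hIe : ∀ x ∈ I, x ∉ e := by
    intro x hx hxe
    obtain ⟨f, hf, hxf⟩ := hIsub hx
    have hfe : f ≠ e := fun h => he (h ▸ hf)
    rcases hdisj f (hsQ hf) e heQ with h | h
    · exact hfe h
    · exact (h.le_bot ⟨hxf, hxe⟩)
  obtain ⟨u, v, huv, heuv⟩ := hedge e heQ
  -- at least one endpoint of e is non-adjacent to all of I
  have hpick : ∃ t ∈ e, ∀ x ∈ I, ¬ G.Adj x t := by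
    by_contra hcon
    push_neg at hcon
    obtain ⟨x, hx, hxu⟩ := hcon u (by rw [heuv]; exact Set.mem_insert _ _)
    obtain ⟨y, hy, hyv⟩ := hcon v (by rw [heuv]; exact Set.mem_insert_of_mem _ rfl)
    have := hP e heQ x u y v heuv hxu hyv (hIe x hx) (hIe y hy)
    exact hIind x hx y hy this
  obtain ⟨t, hte, ht⟩ := hpick
  refine ⟨insert t I, ?_, ?_, ?_⟩
  · intro x hx
    rcases hx with rfl | hx
    · exact ⟨e, Set.mem_insert _ _, hte⟩
    · obtain ⟨f, hf, hxf⟩ := hIsub hx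
      exact ⟨f, Set.mem_insert_of_mem _ hf, hxf⟩
  · intro f hf
    rcases hf with rfl | hf
    · refine ⟨t, ?_⟩
      ext x
      simp only [Set.mem_inter_iff, Set.mem_insert_iff, Set.mem_singleton_iff]
      constructor
      · rintro ⟨rfl | hxI, hxf⟩
        · rfl
        · exact absurd hxf (hIe x hxI)
      · rintro rfl; exact ⟨Or.inl rfl, hte⟩
    · obtain ⟨x, hx⟩ := hIone f hf
      refine ⟨x, ?_⟩
      have htf : t ∉ f := by
        intro htf
        have hfe : e ≠ f := fun h => he (h ▸ hf)
        rcases hdisj e heQ f (hsQ hf) with h | h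
        · exact hfe h
        · exact h.le_bot ⟨hte, htf⟩
      rw [← hx]
      ext y
      simp only [Set.mem_inter_iff, Set.mem_insert_iff]
      constructor
      · rintro ⟨rfl | hyI, hyf⟩
        · exact absurd hyf htf
        · exact ⟨hyI, hyf⟩
      · rintro ⟨hyI, hyf⟩; exact ⟨Or.inr hyI, hyf⟩
  · intro x hx y hy hadj
    rcases hx with rfl | hx
    · rcases hy with rfl | hy
      · exact G.irrefl hadj
      · exact ht y hy hadj.symm
    · rcases hy with rfl | hy
      · exact ht x hx hadj
      · exact hIind x hx y hy hadj
section AUX3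
variable {V : Type} [Fintype V]

lemma range5_ncard {z : Fin 5 → V} (hz : Function.Injective z) :
    (Set.range z).ncard = 5 := by
  rw [← Set.image_univ, Set.ncard_image_of_injective _ hz, Set.ncard_univ]
  simp [Nat.card_eq_fintype_card]

lemma clique_lb {G : SimpleGraph V} {A : Set V} (hA : G.IsClique A) {C : Set V}
    (hC : gVC G C) : A.ncard - 1 ≤ (C ∩ A).ncard := by
  have hd : (A \ C).ncard ≤ 1 := by
    rw [Set.ncard_le_one (Set.toFinite _)]
    intro a ha b hb
    by_contra hab
    have hadj := hA ha.1 hb.1 hab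
    rcases hC a b hadj with h | h
    · exact ha.2 h
    · exact hb.2 h
  have := Set.ncard_inter_add_ncard_diff_eq_ncard A C (Set.toFinite _)
  rw [Set.inter_comm C A]
  omega

lemma cycle_lb {G : SimpleGraph V} {z : Fin 5 → V} (hz : IsInduced5Cycle G z) {C : Set V}
    (hC : gVC G C) : 3 ≤ (C ∩ Set.range z).ncard := by
  have hd : (Set.range z \ C).ncard ≤ 2 := by
    by_contra h
    push_neg at h
    rw [Set.two_lt_ncard (Set.toFinite _)] at h
    obtain ⟨a, ha, b, hb, c, hc, hab, hac, hbc⟩ := h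
    obtain ⟨i, rfl⟩ := ha.1
    obtain ⟨j, rfl⟩ := hb.1
    obtain ⟨k, rfl⟩ := hc.1
    have hnadj : ∀ u v : V, u ∈ Set.range z \ C → v ∈ Set.range z \ C → ¬ G.Adj u v := by
      intro u v hu hv hadj
      rcases hC u v hadj with h | h
      · exact hu.2 h
      · exact hv.2 h
    have hij : i ≠ j := fun h => hab (by rw [h])
    have hjk : j ≠ k := fun h => hbc (by rw [h])
    have hik : i ≠ k := fun h => hac (by rw [h])
    rcases fin5_three i j k hij hjk hik with h | h | h
    · exact hnadj _ _ ⟨⟨i, rfl⟩, ha.2⟩ ⟨⟨j, rfl⟩, hb.2⟩ ((hz.2 i j).2 h)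
    · exact hnadj _ _ ⟨⟨j, rfl⟩, hb.2⟩ ⟨⟨k, rfl⟩, hc.2⟩ ((hz.2 j k).2 h)
    · exact hnadj _ _ ⟨⟨i, rfl⟩, ha.2⟩ ⟨⟨k, rfl⟩, hc.2⟩ ((hz.2 i k).2 h)
  have := Set.ncard_inter_add_ncard_diff_eq_ncard (Set.range z) C (Set.toFinite _)
  have h5 := range5_ncard hz.1
  rw [Set.inter_comm C _]
  omega

lemma cycle_good {G : SimpleGraph V} {z : Fin 5 → V} (hb : IsBasic5Cycle G z) :
    ∃ i : Fin 5, (∀ y, G.Adj (z i) y → y ∈ Set.range z) ∧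
      (∀ y, G.Adj (z (i + 2)) y → y ∈ Set.range z) := by
  classical
  have hdeg : ∀ i : Fin 5, (∃ y, G.Adj (z i) y ∧ y ∉ Set.range z) → 3 ≤ gdeg G (z i) := by
    rintro i ⟨y, hy, hyr⟩
    have h1 : z (i + 1) ∈ G.neighborSet (z i) := (hb.1.2 i (i + 1)).2 (Or.inl rfl)
    have h2 : z (i - 1) ∈ G.neighborSet (z i) :=
      (hb.1.2 i (i - 1)).2 (Or.inr ((by decide : ∀ j : Fin 5, j = j - 1 + 1) i))
    have h3 : y ∈ G.neighborSet (z i) := hy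
    have hne1 : z (i + 1) ≠ z (i - 1) :=
      fun h => (by decide : ∀ j : Fin 5, j + 1 ≠ j - 1) i (hb.1.1 h)
    have hne2 : z (i + 1) ≠ y := fun h => hyr (h ▸ ⟨i + 1, rfl⟩)
    have hne3 : z (i - 1) ≠ y := fun h => hyr (h ▸ ⟨i - 1, rfl⟩)
    have hsub : ({z (i + 1), z (i - 1), y} : Set V) ⊆ G.neighborSet (z i) := by
      intro x hx
      rcases hx with rfl | rfl | rfl
      · exact h1
      · exact h2
      · exact h3
    have hcard : ({z (i + 1), z (i - 1), y} : Set V).ncard = 3 :=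
      Set.ncard_eq_three.mpr ⟨_, _, _, hne1, hne2, hne3, rfl⟩
    have := Set.ncard_le_ncard hsub (Set.toFinite _)
    unfold gdeg
    omega
  have key : ∀ i : Fin 5, ¬ ((∃ y, G.Adj (z i) y ∧ y ∉ Set.range z) ∧
      (∃ y, G.Adj (z (i + 1)) y ∧ y ∉ Set.range z)) :=
    fun i hi => hb.2 i ⟨hdeg i hi.1, hdeg (i + 1) hi.2⟩
  by_contra hcon
  push_neg at hcon
  apply fin5_aux (fun i => ∃ y, G.Adj (z i) y ∧ y ∉ Set.range z) key
  intro i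
  by_cases h : ∃ y, G.Adj (z i) y ∧ y ∉ Set.range z
  · exact Or.inl h
  · push_neg at h
    exact Or.inr (hcon i h)

end AUX3
open Classical in
/-- The minimum number of cover vertices forced inside a part. -/
noncomputable def lowSCQ {V : Type} (G : SimpleGraph V) (A : Set V) : ℕ :=
  if A ∈ SimplexSets G then A.ncard - 1 else if A ∈ Basic5Sets G then 3 else 1

lemma lowSCQ_simplex {V : Type} {G : SimpleGraph V} {A : Set V}
    (h : A ∈ SimplexSets G) : lowSCQ G A = A.ncard - 1 := by
  unfold lowSCQ; rw [if_pos h]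

lemma lowSCQ_cyc {V : Type} {G : SimpleGraph V} {A : Set V}
    (h1 : A ∉ SimplexSets G) (h2 : A ∈ Basic5Sets G) : lowSCQ G A = 3 := by
  unfold lowSCQ; rw [if_neg h1, if_pos h2]

lemma lowSCQ_q {V : Type} {G : SimpleGraph V} {A : Set V}
    (h1 : A ∉ SimplexSets G) (h2 : A ∉ Basic5Sets G) : lowSCQ G A = 1 := by
  unfold lowSCQ; rw [if_neg h1, if_neg h2]

section MAIN
variable {V : Type} [Fintype V]

lemma cyc_not_simplex {G : SimpleGraph V} {A : Set V} (h : A ∈ Basic5Sets G) :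
    A ∉ SimplexSets G := by
  obtain ⟨z, hb, rfl⟩ := h
  rintro ⟨v, hv, hA⟩
  have h0 : z 0 ∈ insert v (G.neighborSet v) := hA ▸ ⟨0, rfl⟩
  have h2 : z 2 ∈ insert v (G.neighborSet v) := hA ▸ ⟨2, rfl⟩
  have hne : z 0 ≠ z 2 := fun h => (by decide : (0 : Fin 5) ≠ 2) (hb.1.1 h)
  have hadj : G.Adj (z 0) (z 2) := hv h0 h2 hne
  exact (by decide : ¬ ((2 : Fin 5) = 0 + 1 ∨ (0 : Fin 5) = 2 + 1)) ((hb.1.2 0 2).1 hadj)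

lemma edge_ncard {G : SimpleGraph V} {e : Set V} (h : IsEdgeSet G e) : e.ncard = 2 := by
  obtain ⟨u, v, huv, rfl⟩ := h
  exact Set.ncard_pair huv.ne

lemma edge_not_cyc {G : SimpleGraph V} {e : Set V} (h : IsEdgeSet G e) :
    e ∉ Basic5Sets G := by
  rintro ⟨z, hb, rfl⟩
  have h2 := edge_ncard h
  rw [range5_ncard hb.1.1] at h2
  exact absurd h2 (by norm_num)

end MAIN
lemma part_LB {V : Type} [Fintype V] {G : SimpleGraph V} {A : Set V}
    (hA : A ∈ SimplexSets G ∨ A ∈ Basic5Sets G ∨ IsEdgeSet G A) {C : Set V}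
    (hC : gVC G C) : lowSCQ G A ≤ (C ∩ A).ncard := by
  by_cases hS : A ∈ SimplexSets G
  · rw [lowSCQ_simplex hS]
    obtain ⟨v, hv, rfl⟩ := hS
    exact clique_lb hv hC
  by_cases hB : A ∈ Basic5Sets G
  · rw [lowSCQ_cyc hS hB]
    obtain ⟨z, hb, rfl⟩ := hB
    exact cycle_lb hb.1 hC
  · rw [lowSCQ_q hS hB]
    rcases hA with h | h | h
    · exact absurd h hS
    · exact absurd h hB
    · obtain ⟨u, v, huv, rfl⟩ := h
      have hne : (C ∩ ({u, v} : Set V)).Nonempty := by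
        rcases hC u v huv with h | h
        · exact ⟨u, h, Or.inl rfl⟩
        · exact ⟨v, h, Or.inr rfl⟩
      exact (Set.ncard_pos (Set.toFinite _)).mpr hne
lemma scq_opt_cover {V : Type} [Fintype V] (D : WOGraph V) (Q : Set (Set V))
    (hscq : IsSCQ D Q) :
    ∃ C0 : Set V, gVC D.graph C0 ∧
      ∀ A ∈ SimplexSets D.graph ∪ Basic5Sets D.graph ∪ Q,
        (C0 ∩ A).ncard = lowSCQ D.graph A := by
  classical
  set G := D.graph with hGdef
  set P : Set (Set V) := SimplexSets G ∪ Basic5Sets G ∪ Q with hPdef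
  have hdisj : ∀ A ∈ P, ∀ B ∈ P, A = B ∨ Disjoint A B := hscq.2.1
  have hQedge : ∀ e ∈ Q, IsEdgeSet G e ∧ PropP G e := by
    intro e he
    rcases hscq.1 with h | h
    · rw [h] at he; exact absurd he (Set.notMem_empty e)
    · exact ⟨h.1.1 e he, h.2 e he⟩
  -- the genuine Q-parts
  set Qg : Set (Set V) := {A | A ∈ Q ∧ A ∉ SimplexSets G ∧ A ∉ Basic5Sets G} with hQgdef
  have hQgQ : Qg ⊆ Q := fun A hA => hA.1
  obtain ⟨IQ, hIQsub, hIQone, hIQind⟩ :=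
    greedy_transversal G Qg (fun e he => (hQedge e (hQgQ he)).1)
      (fun e he => (hQedge e (hQgQ he)).2)
      (fun e he f hf => hdisj e (Or.inr (hQgQ he)) f (Or.inr (hQgQ hf)))
      Qg (Set.toFinite _) Set.Subset.rfl
  -- choose a pick set in each part
  have hex : ∀ A : Set V, ∃ IA : Set V, A ∈ P →
      IA ⊆ A ∧ (A \ IA).ncard = lowSCQ G A ∧
      (∀ x ∈ IA, ∀ y ∈ IA, ¬ G.Adj x y) ∧
      ((∀ x ∈ IA, ∀ y, G.Adj x y → y ∈ A) ∨ IA ⊆ IQ) := by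
    intro A
    by_cases hA : A ∈ P
    swap
    · exact ⟨∅, fun h => absurd h hA⟩
    by_cases hS : A ∈ SimplexSets G
    · obtain ⟨v, hv, hAv⟩ := id hS
      refine ⟨{v}, fun _ => ⟨?_, ?_, ?_, Or.inl ?_⟩⟩
      · intro x hx; rw [hx, hAv]; exact Set.mem_insert _ _
      · rw [lowSCQ_simplex hS]
        exact Set.ncard_diff_singleton_of_mem (by rw [hAv]; exact Set.mem_insert _ _)
      · rintro x rfl y rfl
        exact G.irrefl
      · rintro x rfl y hxy
        rw [hAv]
        exact Set.mem_insert_of_mem _ hxy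
    by_cases hB : A ∈ Basic5Sets G
    · obtain ⟨z, hb, hAz⟩ := id hB
      obtain ⟨i, hg1, hg2⟩ := cycle_good hb
      have hne : z i ≠ z (i + 2) :=
        fun h => (by decide : ∀ j : Fin 5, j ≠ j + 2) i (hb.1.1 h)
      refine ⟨{z i, z (i + 2)}, fun _ => ⟨?_, ?_, ?_, Or.inl ?_⟩⟩
      · rintro x (rfl | rfl) <;> rw [hAz]
        · exact ⟨i, rfl⟩
        · exact ⟨i + 2, rfl⟩
      · rw [lowSCQ_cyc hS hB, hAz]
        rw [Set.ncard_diff (by rintro x (rfl | rfl); exacts [⟨i, rfl⟩, ⟨i + 2, rfl⟩])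
          (Set.toFinite _)]
        rw [range5_ncard hb.1.1, Set.ncard_pair hne]
      · have h1 : ¬ G.Adj (z i) (z (i + 2)) := fun h =>
          (by decide : ∀ j : Fin 5, ¬ (j + 2 = j + 1 ∨ j = j + 2 + 1)) i ((hb.1.2 i (i + 2)).1 h)
        rintro x (rfl | rfl) y (rfl | rfl)
        · exact G.irrefl
        · exact h1
        · exact fun h => h1 h.symm
        · exact G.irrefl
      · rintro x (rfl | rfl) y hxy
        · rw [hAz]; exact hg1 y hxy
        · rw [hAz]; exact hg2 y hxy
    · have hAQ : A ∈ Q := by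
        rcases hA with (h | h) | h
        · exact absurd h hS
        · exact absurd h hB
        · exact h
      have hAQg : A ∈ Qg := ⟨hAQ, hS, hB⟩
      obtain ⟨t, ht⟩ := hIQone A hAQg
      have htA : t ∈ A := by
        have : t ∈ IQ ∩ A := by rw [ht]; rfl
        exact this.2
      have htIQ : t ∈ IQ := by
        have : t ∈ IQ ∩ A := by rw [ht]; rfl
        exact this.1
      refine ⟨{t}, fun _ => ⟨?_, ?_, ?_, Or.inr ?_⟩⟩
      · rintro x rfl; exact htA
      · rw [lowSCQ_q hS hB,
          Set.ncard_diff_singleton_of_mem htA,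
          edge_ncard (hQedge A hAQ).1]
      · rintro x rfl y rfl; exact G.irrefl
      · rintro x rfl; exact htIQ
  choose pick hpick using hex
  set I0 : Set V := {x | ∃ A ∈ P, x ∈ pick A} with hI0def
  refine ⟨I0ᶜ, ?_, ?_⟩
  · -- vertex cover
    intro u v hadj
    by_contra hcon
    push_neg at hcon
    obtain ⟨hu, hv⟩ := hcon
    rw [Set.notMem_compl_iff] at hu hv
    obtain ⟨A, hA, huA⟩ := hu
    obtain ⟨B, hB, hvB⟩ := hv
    rcases hdisj A hA B hB with rfl | hABd
    · exact (hpick A hA).2.2.1 u huA v hvB hadj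
    · rcases (hpick A hA).2.2.2 with hcl | hIQA
      · have hvA : v ∈ A := hcl u huA v hadj
        exact hABd.le_bot ⟨hvA, (hpick B hB).1 hvB⟩ 
      · rcases (hpick B hB).2.2.2 with hcl | hIQB
        · have huB : u ∈ B := hcl v hvB u hadj.symm
          exact hABd.le_bot ⟨(hpick A hA).1 huA, huB⟩
        · exact hIQind u (hIQA huA) v (hIQB hvB) hadj
  · -- cardinalities
    intro A hA
    have hinter : I0ᶜ ∩ A = A \ pick A := by
      ext x
      simp only [Set.mem_inter_iff, Set.mem_compl_iff, Set.mem_diff, hI0def,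
        Set.mem_setOf_eq]
      constructor
      · rintro ⟨hnx, hxA⟩
        exact ⟨hxA, fun hxp => hnx ⟨A, hA, hxp⟩⟩
      · rintro ⟨hxA, hxp⟩
        refine ⟨?_, hxA⟩
        rintro ⟨B, hB, hxB⟩
        rcases hdisj A hA B hB with rfl | hd
        · exact hxp hxB
        · exact hd.le_bot ⟨hxA, (hpick B hB).1 hxB⟩
    rw [hinter]
    exact (hpick A hA).2.1
/-- Lemma `lemma-08ene`. -/
theorem stmt10 {V : Type} [Fintype V] (D : WOGraph V) (Q : Set (Set V))
    (hscq : IsSCQ D Q) (C : Set V) (hC : D.IsVC C) :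
    C.ncard = tau D.graph ↔
      ((∀ K ∈ SimplexSets D.graph, (C ∩ K).ncard = K.ncard - 1) ∧
       (∀ B ∈ Basic5Sets D.graph, (C ∩ B).ncard = 3) ∧
       (∀ e ∈ Q, (C ∩ e).ncard = 1)) := by
  classical
  have hGVC : gVC D.graph C := by
    intro u v huv
    rcases (SimpleGraph.fromRel_adj D.E u v).1 huv with ⟨hne, h | h⟩
    · exact hC u v h
    · exact (hC v u h).symm
  set P : Set (Set V) := SimplexSets D.graph ∪ Basic5Sets D.graph ∪ Q with hPdef
  have hdisj : ∀ A ∈ P, ∀ B ∈ P, A = B ∨ Disjoint A B := hscq.2.1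
  have hcov : ⋃₀ P = Set.univ := hscq.2.2
  set PF : Finset (Set V) := (Set.toFinite P).toFinset with hPFdef
  have hmem : ∀ A : Set V, A ∈ PF ↔ A ∈ P := fun A => Set.Finite.mem_toFinset _
  have hQedge : ∀ e ∈ Q, IsEdgeSet D.graph e ∧ PropP D.graph e := by
    intro e he
    rcases hscq.1 with h | h
    · rw [h] at he; exact absurd he (Set.notMem_empty e)
    · exact ⟨h.1.1 e he, h.2 e he⟩
  have hshape : ∀ A ∈ P, A ∈ SimplexSets D.graph ∨ A ∈ Basic5Sets D.graph ∨
      IsEdgeSet D.graph A := by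
    rintro A ((h | h) | h)
    · exact Or.inl h
    · exact Or.inr (Or.inl h)
    · exact Or.inr (Or.inr (hQedge A h).1)
  have hsum : ∀ X : Set V, X.ncard = ∑ A ∈ PF, (X ∩ A).ncard :=
    fun X => ncard_partition' hdisj hcov X
  have hLB : ∀ C' : Set V, gVC D.graph C' → ∀ A ∈ PF,
      lowSCQ D.graph A ≤ (C' ∩ A).ncard :=
    fun C' hC' A hA => part_LB (hshape A ((hmem A).1 hA)) hC'
  obtain ⟨C0, hC0VC, hC0A⟩ := scq_opt_cover D Q hscq
  have htau : tau D.graph = ∑ A ∈ PF, lowSCQ D.graph A := by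
    apply le_antisymm
    · apply Nat.sInf_le
      exact ⟨C0, hC0VC, by
        rw [hsum C0]
        exact Finset.sum_congr rfl (fun A hA => hC0A A ((hmem A).1 hA))⟩
    · have hne : {n | ∃ C', gVC D.graph C' ∧ C'.ncard = n}.Nonempty :=
        ⟨(Set.univ : Set V).ncard, Set.univ, fun u v _ => Or.inl trivial, rfl⟩
      obtain ⟨C', hC', hCcard⟩ := Nat.sInf_mem hne
      calc ∑ A ∈ PF, lowSCQ D.graph A
          ≤ ∑ A ∈ PF, (C' ∩ A).ncard := Finset.sum_le_sum (hLB C' hC')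
        _ = C'.ncard := (hsum C').symm
        _ = tau D.graph := hCcard
  constructor
  · intro htc
    have hall : ∀ A ∈ PF, (C ∩ A).ncard = lowSCQ D.graph A := by
      by_contra hcon
      push_neg at hcon
      obtain ⟨A, hA, hne⟩ := hcon
      have hlt : ∑ B ∈ PF, lowSCQ D.graph B < ∑ B ∈ PF, (C ∩ B).ncard :=
        Finset.sum_lt_sum (fun B hB => hLB C hGVC B hB)
          ⟨A, hA, lt_of_le_of_ne (hLB C hGVC A hA) (Ne.symm hne)⟩
      rw [← hsum C, htc, htau] at hlt
      exact lt_irrefl _ hlt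
    refine ⟨?_, ?_, ?_⟩
    · intro K hK
      have := hall K ((hmem K).2 (Or.inl (Or.inl hK)))
      rwa [lowSCQ_simplex hK] at this
    · intro B hB
      have := hall B ((hmem B).2 (Or.inl (Or.inr hB)))
      rwa [lowSCQ_cyc (cyc_not_simplex hB) hB] at this
    · intro e he
      have h2 := hall e ((hmem e).2 (Or.inr he))
      have hedge := (hQedge e he).1
      by_cases hS : e ∈ SimplexSets D.graph
      · rw [lowSCQ_simplex hS, edge_ncard hedge] at h2
        exact h2
      · rw [lowSCQ_q hS (edge_not_cyc hedge)] at h2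
        exact h2
  · rintro ⟨h1, h2, h3⟩
    have hall : ∀ A ∈ PF, (C ∩ A).ncard = lowSCQ D.graph A := by
      intro A hA
      have hAP := (hmem A).1 hA
      by_cases hS : A ∈ SimplexSets D.graph
      · rw [lowSCQ_simplex hS]
        have := h1 A hS
        omega
      by_cases hB : A ∈ Basic5Sets D.graph
      · rw [lowSCQ_cyc hS hB]
        exact h2 A hB
      · rcases hAP with (h | h) | h
        · exact absurd h hS
        · exact absurd h hB
        · rw [lowSCQ_q hS hB]
          exact h3 A h
    rw [hsum C, htau]
    exact Finset.sum_congr rfl hall
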